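/- Let R be a commutative ring and n > 1. An element of the triangular monoid MT_n, written as (f_1, f_2 + x_2 u_2, ..., f_n + x_n u_n) with f_1 a permutation polynomial on R, f_i ∈ R[x_1,...,x_{i-1}], and u_i unit-valued on R, is invertible in MT_n if and only if f_1 is an R-automorphism of R[x_1] and each u_i is a unit of the polynomial ring R[x_1,...,x_{i-1}]. -/

import Mathlib

open MvPolynomial

/-- The set `MT_n` of triangular vector-permutation polynomials. -/
def MT (R : Type*) [CommRing R] (n : ℕ) : Set (Fin n → MvPolynomial (Fin n) R) :=
  {p | ∀ i : Fin n,
    (i.val = 0 → ∃ h : Polynomial R, Function.Bijective (fun a : R => h.eval a) ∧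
      p i = Polynomial.aeval (X i : MvPolynomial (Fin n) R) h) ∧
    (i.val ≠ 0 → ∃ f g : MvPolynomial (Fin i.val) R,
      (∀ v : Fin i.val → R, IsUnit (eval v g)) ∧
      p i = rename (Fin.castLE i.isLt.le) f + X i * rename (Fin.castLE i.isLt.le) g)}

/-- Composition of vector-polynomials: `(p ∘ q) i = p_i(q_1,…,q_n)`. -/
noncomputable def vcomp {R : Type*} [CommRing R] {n : ℕ} (p q : Fin n → MvPolynomial (Fin n) R) :
    Fin n → MvPolynomial (Fin n) R :=
  fun i => bind₁ q (p i)


section Aux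

variable {R : Type*} [CommRing R] {n : ℕ}

lemma finStrongInd {n : ℕ} {P : Fin n → Prop}
    (h : ∀ i : Fin n, (∀ j : Fin n, j.val < i.val → P j) → P i) : ∀ i, P i := by
  have H : ∀ k : ℕ, ∀ i : Fin n, i.val ≤ k → P i := by
    intro k
    induction k with
    | zero => intro i hi; exact h i (fun j hj => by omega)
    | succ k ih => intro i hi; exact h i (fun j hj => ih j (by omega))
  exact fun i => H i.val i le_rfl

lemma aeval_mem {σ : Type*} {A : Type*} [CommRing A] [Algebra R A] (S : Subalgebra R A)
    (v : σ → A) (hv : ∀ j, v j ∈ S) (f : MvPolynomial σ R) : aeval v f ∈ S := by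
  induction f using MvPolynomial.induction_on with
  | C a => simpa using S.algebraMap_mem a
  | add p q hp hq => simpa using S.add_mem hp hq
  | mul_X p j hp => simpa using S.mul_mem hp (hv j)

lemma polyAeval_mem {A : Type*} [CommRing A] [Algebra R A] (S : Subalgebra R A)
    (x : A) (hx : x ∈ S) (f : Polynomial R) : Polynomial.aeval x f ∈ S := by
  induction f using Polynomial.induction_on with
  | C a => simpa using S.algebraMap_mem a
  | add p q hp hq => simpa using S.add_mem hp hq
  | monomial m a _ => simpa using S.mul_mem (S.algebraMap_mem a) (S.pow_mem hx (m + 1))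

/-- The triangular shape map. -/
noncomputable def mkT (h : Polynomial R) (F G : (i : Fin n) → MvPolynomial (Fin i.val) R) :
    Fin n → MvPolynomial (Fin n) R := fun i =>
  if i.val = 0 then Polynomial.aeval (X i : MvPolynomial (Fin n) R) h
  else rename (Fin.castLE i.isLt.le) (F i) + X i * rename (Fin.castLE i.isLt.le) (G i)

/-- Subalgebra of polynomials only involving the first `i` variables. -/
noncomputable def Rng (i : Fin n) : Subalgebra R (MvPolynomial (Fin n) R) :=
  (rename (Fin.castLE i.isLt.le) : MvPolynomial (Fin i.val) R →ₐ[R] MvPolynomial (Fin n) R).range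

lemma X_mem_Rng {i j : Fin n} (hj : j.val < i.val) : (X j : MvPolynomial (Fin n) R) ∈ Rng i :=
  ⟨X ⟨j.val, hj⟩, by simp [rename_X]⟩

/-- Retraction onto the first `i` variables. -/
noncomputable def retr (i : Fin n) : MvPolynomial (Fin n) R →ₐ[R] MvPolynomial (Fin i.val) R :=
  aeval (fun j : Fin n => if hj : j.val < i.val then X ⟨j.val, hj⟩ else 0)

lemma retr_rename (i : Fin n) (z : MvPolynomial (Fin i.val) R) :
    retr i (rename (Fin.castLE i.isLt.le) z) = z := by
  rw [retr, aeval_rename]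
  have : ((fun j : Fin n => if hj : j.val < i.val then
      (X ⟨j.val, hj⟩ : MvPolynomial (Fin i.val) R) else 0) ∘ Fin.castLE i.isLt.le) = X := by
    funext j
    simp only [Function.comp_apply, Fin.coe_castLE, j.isLt, dif_pos]
  rw [this, aeval_X_left_apply]

lemma rename_retr_of_mem {i : Fin n} {z : MvPolynomial (Fin n) R} (hz : z ∈ Rng i) :
    rename (Fin.castLE i.isLt.le) (retr i z) = z := by
  obtain ⟨w, hw⟩ := hz
  have hw' : rename (Fin.castLE i.isLt.le) w = z := hw
  rw [← hw', retr_rename]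

lemma rename_eq_aeval_X {σ τ : Type*} (f : σ → τ) (z : MvPolynomial σ R) :
    aeval (fun j => (X (f j) : MvPolynomial τ R)) z = rename f z := by
  induction z using MvPolynomial.induction_on with
  | C a => simp
  | add p q hp hq => rw [map_add, map_add, hp, hq]
  | mul_X p j hp => rw [map_mul, map_mul, hp, aeval_X, rename_X]

/-- Recursive construction of the compositional inverse. -/
noncomputable def invAux (h' : Polynomial R)
    (F U : (i : Fin n) → MvPolynomial (Fin i.val) R) : Fin n → MvPolynomial (Fin n) R
  | i =>
    if i.val = 0 then Polynomial.aeval (X i : MvPolynomial (Fin n) R) h'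
    else (X i - aeval (fun j : Fin i.val => invAux h' F U (Fin.castLE i.isLt.le j)) (F i)) *
      aeval (fun j : Fin i.val => invAux h' F U (Fin.castLE i.isLt.le j)) (U i)
  termination_by i => i.val
  decreasing_by all_goals exact j.isLt

lemma invAux_mem_Rng (h' : Polynomial R) (F U : (i : Fin n) → MvPolynomial (Fin i.val) R) :
    ∀ j : Fin n, ∀ i : Fin n, j.val < i.val → invAux h' F U j ∈ Rng i := by
  refine finStrongInd (fun j IH i hij => ?_)
  rw [invAux]
  by_cases hj : j.val = 0
  · rw [if_pos hj]
    exact polyAeval_mem _ _ (X_mem_Rng hij) h'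
  · rw [if_neg hj]
    refine Subalgebra.mul_mem _ (Subalgebra.sub_mem _ (X_mem_Rng hij) ?_) ?_
    · exact aeval_mem _ _ (fun m => IH _ m.isLt i (lt_trans m.isLt hij)) _
    · exact aeval_mem _ _ (fun m => IH _ m.isLt i (lt_trans m.isLt hij)) _

lemma bind_invAux (h h' : Polynomial R) (F G U : (i : Fin n) → MvPolynomial (Fin i.val) R)
    (h'h : h'.comp h = Polynomial.X)
    (hU : ∀ i : Fin n, i.val ≠ 0 → G i * U i = 1) :
    ∀ i : Fin n, bind₁ (mkT h F G) (invAux h' F U i) = X i := by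
  refine finStrongInd (fun i IH => ?_)
  rw [invAux]
  by_cases hi : i.val = 0
  · rw [if_pos hi, ← Polynomial.aeval_algHom_apply (bind₁ (mkT h F G)) _ h', bind₁_X_right,
      mkT, if_pos hi, ← Polynomial.aeval_comp, h'h, Polynomial.aeval_X]
  · have hIH : ∀ j : Fin i.val,
        bind₁ (mkT h F G) (invAux h' F U (Fin.castLE i.isLt.le j)) = X (Fin.castLE i.isLt.le j) :=
      fun j => IH _ j.isLt
    rw [if_neg hi, map_mul, map_sub, bind₁_X_right, comp_aeval_apply, comp_aeval_apply]
    simp only [hIH]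
    rw [rename_eq_aeval_X, rename_eq_aeval_X]
    have hmk : mkT h F G i = rename (Fin.castLE i.isLt.le) (F i)
        + X i * rename (Fin.castLE i.isLt.le) (G i) := by rw [mkT, if_neg hi]
    rw [hmk, add_sub_cancel_left, mul_assoc, ← map_mul, hU i hi, map_one, mul_one]

/-- Values of previously constructed inverse components. -/
noncomputable def Qc (q : Fin n → MvPolynomial (Fin n) R) (i : Fin n) :
    Fin i.val → MvPolynomial (Fin n) R := fun j => q (Fin.castLE i.isLt.le j)

noncomputable def Fd (h' : Polynomial R) (F U : (i : Fin n) → MvPolynomial (Fin i.val) R) :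
    (i : Fin n) → MvPolynomial (Fin i.val) R := fun i =>
  retr i (-(aeval (Qc (invAux h' F U) i) (F i) * aeval (Qc (invAux h' F U) i) (U i)))

noncomputable def Gd (h' : Polynomial R) (F U : (i : Fin n) → MvPolynomial (Fin i.val) R) :
    (i : Fin n) → MvPolynomial (Fin i.val) R := fun i =>
  retr i (aeval (Qc (invAux h' F U) i) (U i))

lemma aeval_Qc_mem (h' : Polynomial R) (F U : (i : Fin n) → MvPolynomial (Fin i.val) R)
    (i : Fin n) (z : MvPolynomial (Fin i.val) R) :
    aeval (Qc (invAux h' F U) i) z ∈ Rng i :=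
  aeval_mem _ _ (fun m => invAux_mem_Rng h' F U _ i m.isLt) z

lemma invAux_ne (h' : Polynomial R) (F U : (i : Fin n) → MvPolynomial (Fin i.val) R)
    {i : Fin n} (hi : i.val ≠ 0) :
    invAux h' F U i = (X i - aeval (Qc (invAux h' F U) i) (F i)) *
      aeval (Qc (invAux h' F U) i) (U i) := by
  rw [invAux, if_neg hi]
  rfl

set_option maxHeartbeats 2000000 in
lemma mkT_Fd_Gd (h' : Polynomial R) (F U : (i : Fin n) → MvPolynomial (Fin i.val) R) :
    mkT h' (Fd h' F U) (Gd h' F U) = invAux h' F U := by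
  funext i
  by_cases hi : i.val = 0
  · rw [invAux, if_pos hi, mkT, if_pos hi]
  · rw [mkT, if_neg hi, Fd, Gd]
    have hA := rename_retr_of_mem (Subalgebra.neg_mem _ (Subalgebra.mul_mem _
      (aeval_Qc_mem h' F U i (F i)) (aeval_Qc_mem h' F U i (U i))))
    have hB := rename_retr_of_mem (aeval_Qc_mem h' F U i (U i))
    rw [invAux_ne h' F U hi, hA, hB]
    ring

lemma exists_inv (h h' : Polynomial R) (F G : (i : Fin n) → MvPolynomial (Fin i.val) R)
    (h'h : h'.comp h = Polynomial.X)
    (hG : ∀ i : Fin n, i.val ≠ 0 → IsUnit (G i)) :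
    ∃ F' G' : (i : Fin n) → MvPolynomial (Fin i.val) R,
      (∀ i : Fin n, i.val ≠ 0 → IsUnit (G' i)) ∧
      ∀ i : Fin n, bind₁ (mkT h F G) (mkT h' F' G' i) = X i := by
  classical
  refine ⟨Fd h' F (fun i => if hi : i.val = 0 then 0 else ↑(hG i hi).unit⁻¹),
    Gd h' F (fun i => if hi : i.val = 0 then 0 else ↑(hG i hi).unit⁻¹), ?_, ?_⟩
  · intro i hi
    rw [Gd]
    refine (IsUnit.map _ (IsUnit.map _ ?_))
    rw [dif_neg hi]
    exact Units.isUnit _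
  · intro i
    rw [mkT_Fd_Gd]
    refine bind_invAux h h' F G _ h'h (fun i hi => ?_) i
    rw [dif_neg hi]
    exact (hG i hi).mul_val_inv

lemma mkT_mem_MT (h' : Polynomial R) (F' G' : (i : Fin n) → MvPolynomial (Fin i.val) R)
    (hbij : Function.Bijective fun a : R => h'.eval a)
    (hG' : ∀ i : Fin n, i.val ≠ 0 → IsUnit (G' i)) : mkT h' F' G' ∈ MT R n := by
  intro i
  constructor
  · intro hi
    exact ⟨h', hbij, by rw [mkT, if_pos hi]⟩
  · intro hi
    exact ⟨F' i, G' i, fun v => (hG' i hi).map (eval v), by rw [mkT, if_neg hi]⟩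

lemma bij_of_comp (h h' : Polynomial R) (hh' : h.comp h' = Polynomial.X)
    (h'h : h'.comp h = Polynomial.X) : Function.Bijective fun a : R => h'.eval a := by
  rw [Function.bijective_iff_has_inverse]
  refine ⟨fun a => h.eval a, fun a => ?_, fun a => ?_⟩
  · show Polynomial.eval (Polynomial.eval a h') h = a
    rw [← Polynomial.eval_comp, hh', Polynomial.eval_X]
  · show Polynomial.eval (Polynomial.eval a h) h' = a
    rw [← Polynomial.eval_comp, h'h, Polynomial.eval_X]

-- fixed-variable lemmas for the forward direction
lemma aeval_fix_rename {i : Fin n} {w : Fin n → MvPolynomial (Fin n) R}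
    (hw : ∀ j : Fin n, j.val < i.val → w j = X j) (z : MvPolynomial (Fin i.val) R) :
    aeval w (rename (Fin.castLE i.isLt.le) z) = rename (Fin.castLE i.isLt.le) z := by
  rw [aeval_rename]
  have : w ∘ Fin.castLE i.isLt.le =
      fun j : Fin i.val => (X (Fin.castLE i.isLt.le j) : MvPolynomial (Fin n) R) := by
    funext j
    exact hw _ j.isLt
  rw [this, rename_eq_aeval_X]

lemma aeval_fix_mkT {i : Fin n} {w : Fin n → MvPolynomial (Fin n) R}
    (hw : ∀ j : Fin n, j.val < i.val → w j = X j)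
    (h : Polynomial R) (F G : (m : Fin n) → MvPolynomial (Fin m.val) R)
    (k : Fin n) (hk : k.val < i.val) : aeval w (mkT h F G k) = mkT h F G k := by
  by_cases hk0 : k.val = 0
  · rw [mkT, if_pos hk0, ← Polynomial.aeval_algHom_apply (aeval w) _ h, aeval_X, hw k hk]
  · have hle : ∀ j : Fin k.val, (Fin.castLE k.isLt.le j).val < i.val :=
      fun j => lt_trans j.isLt hk
    rw [mkT, if_neg hk0, map_add, map_mul, aeval_X, hw k hk,
      aeval_fix_rename (i := k) (fun j hj => hw j (lt_trans hj hk)),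
      aeval_fix_rename (i := k) (fun j hj => hw j (lt_trans hj hk))]

lemma bind₁_eq_aeval {σ τ : Type*} (f : σ → MvPolynomial τ R) (φ : MvPolynomial σ R) :
    bind₁ f φ = aeval f φ := rfl

lemma aeval_fix_comp {i : Fin n} {w : Fin n → MvPolynomial (Fin n) R}
    (hw : ∀ j : Fin n, j.val < i.val → w j = X j)
    (h : Polynomial R) (F G : (m : Fin n) → MvPolynomial (Fin m.val) R)
    (z : MvPolynomial (Fin i.val) R) :
    aeval w (aeval (mkT h F G ∘ Fin.castLE i.isLt.le) z) =
      aeval (mkT h F G ∘ Fin.castLE i.isLt.le) z := by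
  rw [comp_aeval_apply]
  have hfun : (fun j : Fin i.val => aeval w ((mkT h F G ∘ Fin.castLE i.isLt.le) j)) =
      mkT h F G ∘ Fin.castLE i.isLt.le := by
    funext j
    exact aeval_fix_mkT hw h F G (Fin.castLE i.isLt.le j) j.isLt
  rw [hfun]

lemma update_fix {i j : Fin n} (c : MvPolynomial (Fin n) R) (hj : j.val < i.val) :
    Function.update (X : Fin n → MvPolynomial (Fin n) R) i c j = X j :=
  Function.update_of_ne (Fin.ne_of_val_ne (by omega)) _ _

end Aux

/-- An element `(f₁, f₂ + x₂·u₂, …, f_n + x_n·u_n)` of the triangular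
monoid `MT_n` (first component a permutation polynomial `h`, `u_i` unit-valued) is
invertible in `MT_n` iff `h` is an `R`-automorphism of `R[x₁]` (it has a
compositional inverse) and each `u_i` is a unit of the polynomial ring
`R[x_1,…,x_{i-1}]`. -/
theorem MT_unit_iff (R : Type*) [CommRing R] (n : ℕ) (hn : 1 < n)
    (h : Polynomial R) (hperm : Function.Bijective fun a : R => h.eval a)
    (F G : (i : Fin n) → MvPolynomial (Fin i.val) R)
    (hG : ∀ i : Fin n, i.val ≠ 0 → ∀ v : Fin i.val → R, IsUnit (eval v (G i)))
    (p : Fin n → MvPolynomial (Fin n) R)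
    (hp : p = fun i => if i.val = 0 then Polynomial.aeval (X i : MvPolynomial (Fin n) R) h
      else rename (Fin.castLE i.isLt.le) (F i) + X i * rename (Fin.castLE i.isLt.le) (G i)) :
    (∃ q ∈ MT R n, vcomp p q = (fun i => X i) ∧ vcomp q p = (fun i => X i)) ↔
      ((∃ h' : Polynomial R, h.comp h' = Polynomial.X ∧ h'.comp h = Polynomial.X) ∧
        ∀ i : Fin n, i.val ≠ 0 → IsUnit (G i)) := by
  have hpm : p = mkT h F G := hp
  constructor
  · rintro ⟨q, hqMT, hpq, hqp⟩
    have h0n : 0 < n := by omega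
    obtain ⟨h', hbij', hq0⟩ := (hqMT ⟨0, h0n⟩).1 rfl
    have ψdef : ∀ s : Polynomial R,
        (aeval (fun _ : Fin n => (Polynomial.X : Polynomial R)))
          (Polynomial.aeval (X ⟨0, h0n⟩ : MvPolynomial (Fin n) R) s) = s := by
      intro s
      rw [← Polynomial.aeval_algHom_apply, aeval_X, Polynomial.aeval_X_left_apply]
    constructor
    · refine ⟨h', ?_, ?_⟩
      · have e : bind₁ q (p ⟨0, h0n⟩) = X ⟨0, h0n⟩ := congrFun hpq ⟨0, h0n⟩
        rw [hpm, mkT, if_pos rfl, ← Polynomial.aeval_algHom_apply (bind₁ q) _ h,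
          bind₁_X_right, hq0, ← Polynomial.aeval_comp] at e
        have := congrArg (aeval (fun _ : Fin n => (Polynomial.X : Polynomial R))) e
        rwa [ψdef, aeval_X] at this
      · have e : bind₁ p (q ⟨0, h0n⟩) = X ⟨0, h0n⟩ := congrFun hqp ⟨0, h0n⟩
        rw [hq0, ← Polynomial.aeval_algHom_apply (bind₁ p) _ h', bind₁_X_right, hpm, mkT,
          if_pos rfl, ← Polynomial.aeval_comp] at e
        have := congrArg (aeval (fun _ : Fin n => (Polynomial.X : Polynomial R))) e
        rwa [ψdef, aeval_X] at this
    · intro i hi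
      obtain ⟨f, g, hgv, hqi⟩ := (hqMT i).2 hi
      have e : bind₁ p (q i) = X i := congrFun hqp i
      rw [hqi, map_add, map_mul, bind₁_X_right, bind₁_rename, bind₁_rename,
        bind₁_eq_aeval, bind₁_eq_aeval, hpm, mkT, if_neg hi] at e
      set A := aeval (mkT h F G ∘ Fin.castLE i.isLt.le) f with hA
      set B := aeval (mkT h F G ∘ Fin.castLE i.isLt.le) g with hB
      -- evaluate at X i ↦ 0
      have e0 := congrArg (aeval (Function.update (X : Fin n → MvPolynomial (Fin n) R) i 0)) e
      have e1 := congrArg (aeval (Function.update (X : Fin n → MvPolynomial (Fin n) R) i 1)) e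
      have hw0 : ∀ j : Fin n, j.val < i.val →
          Function.update (X : Fin n → MvPolynomial (Fin n) R) i 0 j = X j :=
        fun j hj => update_fix 0 hj
      have hw1 : ∀ j : Fin n, j.val < i.val →
          Function.update (X : Fin n → MvPolynomial (Fin n) R) i 1 j = X j :=
        fun j hj => update_fix 1 hj
      simp only [map_add, map_mul, aeval_X, Function.update_self, hA, hB,
        aeval_fix_comp hw0 h F G, aeval_fix_comp hw1 h F G,
        aeval_fix_rename hw0, aeval_fix_rename hw1] at e0 e1
      have key : rename (Fin.castLE i.isLt.le) (G i) * B = 1 := by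
        linear_combination e1 - e0
      have hu : IsUnit (rename (Fin.castLE i.isLt.le) (G i)) := IsUnit.of_mul_eq_one _ key
      have := hu.map (retr i)
      rwa [retr_rename] at this
  · rintro ⟨⟨h', hh', h'h⟩, hGu⟩
    obtain ⟨F', G', hG'u, hqp⟩ := exists_inv h h' F G h'h hGu
    obtain ⟨F'', G'', _, hrq⟩ := exists_inv h' h F' G' hh' hG'u
    have hA : (bind₁ (mkT h F G)).comp (bind₁ (mkT h' F' G')) =
        AlgHom.id R (MvPolynomial (Fin n) R) := by
      apply MvPolynomial.algHom_ext
      intro j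
      simp only [AlgHom.comp_apply, bind₁_X_right, AlgHom.id_apply]
      exact hqp j
    have hB : (bind₁ (mkT h' F' G')).comp (bind₁ (mkT h F'' G'')) =
        AlgHom.id R (MvPolynomial (Fin n) R) := by
      apply MvPolynomial.algHom_ext
      intro j
      simp only [AlgHom.comp_apply, bind₁_X_right, AlgHom.id_apply]
      exact hrq j
    have hC : (bind₁ (mkT h' F' G')).comp (bind₁ (mkT h F G)) =
        AlgHom.id R (MvPolynomial (Fin n) R) := by
      calc (bind₁ (mkT h' F' G')).comp (bind₁ (mkT h F G))
          = ((bind₁ (mkT h' F' G')).comp (bind₁ (mkT h F G))).comp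
            ((bind₁ (mkT h' F' G')).comp (bind₁ (mkT h F'' G''))) := by
            rw [hB, AlgHom.comp_id]
        _ = (bind₁ (mkT h' F' G')).comp (((bind₁ (mkT h F G)).comp
            (bind₁ (mkT h' F' G'))).comp (bind₁ (mkT h F'' G''))) := by
            rw [AlgHom.comp_assoc, AlgHom.comp_assoc]
        _ = (bind₁ (mkT h' F' G')).comp (bind₁ (mkT h F'' G'')) := by
            rw [hA, AlgHom.id_comp]
        _ = AlgHom.id R (MvPolynomial (Fin n) R) := hB
    refine ⟨mkT h' F' G', mkT_mem_MT h' F' G' (bij_of_comp h h' hh' h'h) hG'u, ?_, ?_⟩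
    · funext i
      show bind₁ (mkT h' F' G') (p i) = X i
      rw [hpm]
      have := AlgHom.congr_fun hC (X i)
      simpa only [AlgHom.comp_apply, bind₁_X_right, AlgHom.id_apply] using this
    · funext i
      show bind₁ p (mkT h' F' G' i) = X i
      rw [hpm]
      exact hqp i
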